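/- Let {F_s} be a POVM (F_s positive semidefinite with ∑_s F_s = 1), let Δ be Hermitian, and let σ be a density matrix satisfying σ ⪰ μ·I for some μ > 0. Then ∑_s tr(F_s Δ)² / tr(F_s σ) ≤ μ⁻¹ · tr(Δ²). -/

import Mathlib

open Matrix ComplexOrder

section Aux

variable {d : ℕ}

open scoped MatrixOrder in
/-- square root of a PSD matrix. -/
noncomputable def Matrix.PosSemidef.sqrt {A : Matrix (Fin d) (Fin d) ℂ} (_hA : A.PosSemidef) :
    Matrix (Fin d) (Fin d) ℂ := CFC.sqrt A

open scoped MatrixOrder in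
lemma Matrix.PosSemidef.sqrt_mul_self {A : Matrix (Fin d) (Fin d) ℂ} (hA : A.PosSemidef) :
    hA.sqrt * hA.sqrt = A := CFC.sqrt_mul_sqrt_self A hA.nonneg

open scoped MatrixOrder in
lemma Matrix.PosSemidef.posSemidef_sqrt {A : Matrix (Fin d) (Fin d) ℂ} (hA : A.PosSemidef) :
    hA.sqrt.PosSemidef := (CFC.sqrt_nonneg A).posSemidef

/-- trace of a PSD matrix has nonnegative real part. -/
lemma psd_trace_re_nonneg {A : Matrix (Fin d) (Fin d) ℂ} (hA : A.PosSemidef) :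
    0 ≤ A.trace.re := by
  have h : ∀ i, 0 ≤ (A i i).re := by
    intro i
    have h0 : 0 ≤ star (Pi.single i 1 : Fin d → ℂ) ⬝ᵥ A *ᵥ (Pi.single i 1) := hA.dotProduct_mulVec_nonneg _
    have h1 : star (Pi.single i 1 : Fin d → ℂ) ⬝ᵥ A *ᵥ (Pi.single i 1) = A i i := by
      simp [Matrix.mulVec_single, dotProduct, Pi.single_apply, apply_ite,
        Finset.sum_ite_eq']
    rw [h1] at h0
    exact (Complex.le_def.mp h0).1
  rw [Matrix.trace, Complex.re_sum]
  exact Finset.sum_nonneg fun i _ => h i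

/-- Cauchy–Schwarz for the Frobenius inner product, real-part form. -/
lemma trace_cauchy_schwarz (X Y : Matrix (Fin d) (Fin d) ℂ) :
    ((Xᴴ * Y).trace.re) ^ 2 ≤ (Xᴴ * X).trace.re * (Yᴴ * Y).trace.re := by
  let toE : Matrix (Fin d) (Fin d) ℂ → EuclideanSpace ℂ (Fin d × Fin d) :=
    fun A => (WithLp.equiv 2 _).symm (fun p => A p.1 p.2)
  let x := toE X
  let y := toE Y
  have key : ∀ (A B : Matrix (Fin d) (Fin d) ℂ),
      (inner ℂ (toE A) (toE B) : ℂ) = (Aᴴ * B).trace := by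
    intro A B
    rw [Matrix.trace]
    simp only [toE, PiLp.inner_apply, RCLike.inner_apply, WithLp.equiv_symm_apply, PiLp.toLp_apply,
      Matrix.diag_apply, Matrix.mul_apply, Matrix.conjTranspose_apply, starRingEnd_apply]
    rw [Fintype.sum_prod_type]
    simp only [mul_comm (B _ _)]
    exact Finset.sum_comm
  have hcs := inner_mul_inner_self_le (𝕜 := ℂ) x y
  have hyx : (inner ℂ y x : ℂ) = starRingEnd ℂ (inner ℂ x y) := (inner_conj_symm y x).symm
  rw [hyx, RCLike.norm_conj] at hcs
  have hxy : (inner ℂ x y : ℂ) = (Xᴴ * Y).trace := key X Y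
  have hxx : (inner ℂ x x : ℂ) = (Xᴴ * X).trace := key X X
  have hyy : (inner ℂ y y : ℂ) = (Yᴴ * Y).trace := key Y Y
  rw [hxy, hxx, hyy] at hcs
  simp only [RCLike.re_to_complex] at hcs
  calc ((Xᴴ * Y).trace.re) ^ 2
      ≤ ‖(Xᴴ * Y).trace‖ * ‖(Xᴴ * Y).trace‖ := by
        rw [sq]
        calc (Xᴴ * Y).trace.re * (Xᴴ * Y).trace.re
            = |(Xᴴ * Y).trace.re| * |(Xᴴ * Y).trace.re| := (abs_mul_abs_self _).symm
          _ ≤ ‖(Xᴴ * Y).trace‖ * ‖(Xᴴ * Y).trace‖ := by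
              have h := Complex.abs_re_le_norm ((Xᴴ * Y).trace)
              exact mul_le_mul h h (abs_nonneg _) (norm_nonneg _)
    _ ≤ _ := hcs

end Aux

/-- For a POVM `{F s}`, a Hermitian `Δ`, and a density matrix `σ ⪰ μ·I` with `μ > 0`,
`∑ s, tr(F_s Δ)² / tr(F_s σ) ≤ μ⁻¹ · tr(Δ²)`.  (Terms with vanishing
denominator are interpreted as `0`, which is Lean's convention for division.) -/
theorem povm_likelihood_bound {d m : ℕ} (μ : ℝ) (hμ : 0 < μ)
    (F : Fin m → Matrix (Fin d) (Fin d) ℂ)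
    (hFpos : ∀ s, (F s).PosSemidef) (hFsum : ∑ s, F s = 1)
    (Δ σ : Matrix (Fin d) (Fin d) ℂ)
    (hΔ : Δ.IsHermitian)
    (hσ : σ.PosSemidef) (hσtr : σ.trace = 1)
    (hμσ : (σ - (μ : ℂ) • 1).PosSemidef) :
    ∑ s, ((F s * Δ).trace.re) ^ 2 / ((F s * σ).trace.re)
      ≤ μ⁻¹ * ((Δ ^ 2).trace.re) := by
  classical
  -- σ is positive definite
  have hσPD : σ.PosDef := by
    refine Matrix.PosDef.of_dotProduct_mulVec_pos hσ.isHermitian fun x hx => ?_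
    have h1 := hμσ.dotProduct_mulVec_nonneg x
    have h2 : 0 < (star x ⬝ᵥ x : ℂ) := Matrix.dotProduct_star_self_pos_iff.mpr hx
    have h3 : 0 < (μ : ℂ) * (star x ⬝ᵥ x) :=
      mul_pos (Complex.zero_lt_real.mpr hμ) h2
    have heq : star x ⬝ᵥ σ *ᵥ x
        = star x ⬝ᵥ ((σ - (μ:ℂ) • 1) *ᵥ x) + (μ:ℂ) * (star x ⬝ᵥ x) := by
      simp only [Matrix.sub_mulVec, dotProduct_sub, Matrix.smul_mulVec,
        Matrix.one_mulVec, dotProduct_smul, smul_eq_mul]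
      ring
    rw [heq]
    exact lt_of_lt_of_le h3 (le_add_of_nonneg_left h1)
  set R := hσ.sqrt with hRdef
  have hRR : R * R = σ := hσ.sqrt_mul_self
  have hRH : R.IsHermitian := hσ.posSemidef_sqrt.isHermitian
  have hRdet : IsUnit R.det := by
    have hd : R.det * R.det = σ.det := by rw [← Matrix.det_mul, hRR]
    have hσdet : σ.det ≠ 0 := ne_of_gt hσPD.det_pos
    refine isUnit_iff_ne_zero.mpr fun h => hσdet ?_
    rw [← hd, h, mul_zero]
  set S := R⁻¹ with hSdef
  have hRS : R * S = 1 := Matrix.mul_nonsing_inv R hRdet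
  have hSR : S * R = 1 := Matrix.nonsing_inv_mul R hRdet
  have hSH : S.IsHermitian := hRH.inv
  set K := Δ * (S * S) * Δ with hKdef
  clear_value K S R
  -- per-outcome Cauchy-Schwarz
  have key : ∀ s, ((F s * Δ).trace.re) ^ 2
      ≤ (F s * σ).trace.re * (F s * K).trace.re := by
    intro s
    set G := (hFpos s).sqrt with hGdef
    have hGG : G * G = F s := (hFpos s).sqrt_mul_self
    have hGH : G.IsHermitian := (hFpos s).posSemidef_sqrt.isHermitian
    have hcs := trace_cauchy_schwarz (R * G) (S * (Δ * G))
    have e1 : ((R * G)ᴴ * (R * G)).trace = (F s * σ).trace := by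
      rw [Matrix.conjTranspose_mul, hRH.eq, hGH.eq]
      have h : G * R * (R * G) = G * (σ * G) := by
        simp only [Matrix.mul_assoc]
        rw [← Matrix.mul_assoc R R, hRR]
      rw [h, Matrix.trace_mul_comm, Matrix.mul_assoc, hGG, Matrix.trace_mul_comm]
    have e2 : ((R * G)ᴴ * (S * (Δ * G))).trace = (F s * Δ).trace := by
      rw [Matrix.conjTranspose_mul, hRH.eq, hGH.eq]
      have h : G * R * (S * (Δ * G)) = G * (Δ * G) := by
        simp only [Matrix.mul_assoc]
        rw [← Matrix.mul_assoc R S, hRS, Matrix.one_mul]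
      rw [h, Matrix.trace_mul_comm, Matrix.mul_assoc, hGG, Matrix.trace_mul_comm]
    have e3 : ((S * (Δ * G))ᴴ * (S * (Δ * G))).trace = (F s * K).trace := by
      rw [Matrix.conjTranspose_mul, Matrix.conjTranspose_mul, hSH.eq, hΔ.eq, hGH.eq]
      have h : G * Δ * S * (S * (Δ * G)) = G * (K * G) := by
        simp only [hKdef, Matrix.mul_assoc]
      rw [h, Matrix.trace_mul_comm, Matrix.mul_assoc, hGG, Matrix.trace_mul_comm]
    rw [e1, e2, e3] at hcs
    exact hcs
  -- nonnegativity
  have hb : ∀ s, 0 ≤ (F s * σ).trace.re := by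
    intro s
    set G := (hFpos s).sqrt with hGdef
    have hGG : G * G = F s := (hFpos s).sqrt_mul_self
    have hGH : G.IsHermitian := (hFpos s).posSemidef_sqrt.isHermitian
    have h : (F s * σ).trace = (Gᴴ * σ * G).trace := by
      rw [hGH.eq, ← hGG, Matrix.mul_assoc G G σ, Matrix.trace_mul_comm]
    rw [h]
    exact psd_trace_re_nonneg (hσ.conjTranspose_mul_mul_same G)
  have hKpsd : K.PosSemidef := by
    have hSS : (S * S).PosSemidef := by
      have h1 := (Matrix.PosSemidef.one (n := Fin d) (R := ℂ)).mul_mul_conjTranspose_same S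
      rw [Matrix.mul_one, hSH.eq] at h1
      exact h1
    have h2 := hSS.conjTranspose_mul_mul_same Δ
    rw [hΔ.eq] at h2
    rw [hKdef]
    exact h2
  have hc : ∀ s, 0 ≤ (F s * K).trace.re := by
    intro s
    set G := (hFpos s).sqrt with hGdef
    have hGG : G * G = F s := (hFpos s).sqrt_mul_self
    have hGH : G.IsHermitian := (hFpos s).posSemidef_sqrt.isHermitian
    have h : (F s * K).trace = (Gᴴ * K * G).trace := by
      rw [hGH.eq, ← hGG, Matrix.mul_assoc G G K, Matrix.trace_mul_comm]
    rw [h]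
    exact psd_trace_re_nonneg (hKpsd.conjTranspose_mul_mul_same G)
  -- divide
  have step1 : ∀ s, ((F s * Δ).trace.re) ^ 2 / ((F s * σ).trace.re)
      ≤ (F s * K).trace.re := by
    intro s
    rcases eq_or_lt_of_le (hb s) with h0 | h0
    · rw [← h0, div_zero]; exact hc s
    · rw [div_le_iff₀ h0, mul_comm]
      exact key s
  -- sum the K-terms
  have sumK : ∑ s, (F s * K).trace.re = K.trace.re := by
    rw [← Complex.re_sum]
    congr 1
    rw [← Matrix.trace_sum, ← Finset.sum_mul, hFsum, Matrix.one_mul]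
  -- final bound on tr K
  have hfinal : K.trace.re ≤ μ⁻¹ * ((Δ ^ 2).trace.re) := by
    have hB : (1 - (μ:ℂ) • (S * S)).PosSemidef := by
      have h := hμσ.mul_mul_conjTranspose_same S
      rw [hSH.eq] at h
      have heq : S * (σ - (μ:ℂ) • 1) * S = 1 - (μ:ℂ) • (S * S) := by
        rw [Matrix.mul_sub, Matrix.sub_mul]
        congr 1
        · rw [← hRR, ← Matrix.mul_assoc, hSR, Matrix.one_mul, hRS]
        · rw [Matrix.mul_smul, Matrix.smul_mul, Matrix.mul_one]
      rw [heq] at h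
      exact h
    have hpsd : (Δᴴ * (1 - (μ:ℂ) • (S * S)) * Δ).PosSemidef :=
      hB.conjTranspose_mul_mul_same Δ
    have htr : 0 ≤ (Δᴴ * (1 - (μ:ℂ) • (S * S)) * Δ).trace.re := psd_trace_re_nonneg hpsd
    have hexp : (Δᴴ * (1 - (μ:ℂ) • (S * S)) * Δ).trace
        = (Δ ^ 2).trace - (μ:ℂ) * K.trace := by
      rw [hΔ.eq, Matrix.mul_sub, Matrix.sub_mul, Matrix.mul_one, Matrix.mul_smul,
        Matrix.smul_mul, Matrix.trace_sub, Matrix.trace_smul, ← pow_two, ← hKdef,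
        smul_eq_mul]
    rw [hexp] at htr
    have h4 : 0 ≤ (Δ ^ 2).trace.re - μ * K.trace.re := by
      simpa [Complex.sub_re, Complex.mul_re] using htr
    have h5 : μ * K.trace.re ≤ (Δ ^ 2).trace.re := by linarith
    calc K.trace.re = μ⁻¹ * (μ * K.trace.re) := by field_simp
      _ ≤ μ⁻¹ * ((Δ ^ 2).trace.re) :=
          mul_le_mul_of_nonneg_left h5 (le_of_lt (inv_pos.mpr hμ))
  calc ∑ s, ((F s * Δ).trace.re) ^ 2 / ((F s * σ).trace.re)
      ≤ ∑ s, (F s * K).trace.re := Finset.sum_le_sum fun s _ => step1 s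
    _ = K.trace.re := sumK
    _ ≤ μ⁻¹ * ((Δ ^ 2).trace.re) := hfinal
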